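/- For the multiplicative weights algorithm with rewards in [-1,1], run for K rounds with learning rate ℓ = √(ln N / K) (assuming K ≥ 4 ln N so that ℓ ≤ 1/2), the regret against any fixed distribution P satisfies ∑_{k=1}^K ∑_i P(i) u_{i,k} − ∑_{k=1}^K ∑_i Q_k(i) u_{i,k} ≤ 2√(K ln N). -/

import Mathlib

lemma aux_log_one_add (y : ℝ) (hy : |y| ≤ 1/2) : y - y^2 ≤ Real.log (1 + y) := by
  have h1 : |(-y)| < 1 := by rw [abs_neg]; linarith
  have h := Real.abs_log_sub_add_sum_range_le h1 4
  rw [abs_neg] at h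
  simp only [Finset.sum_range_succ, Finset.sum_range_zero] at h
  norm_num at h
  have hy1 := abs_le.mp hy
  rcases le_or_gt 0 y with hpos | hneg
  · have ha : |y| = y := abs_of_nonneg hpos
    rw [ha] at h
    have hb := (abs_le.mp h).1
    have h1y : (1:ℝ)/2 ≤ 1 - y := by linarith
    have h5 : y^5 / (1 - y) ≤ 2 * y^5 := by
      rw [div_le_iff₀ (by linarith)]
      nlinarith [pow_nonneg hpos 5, pow_nonneg hpos 6]
    nlinarith [hb, pow_nonneg hpos 3,
      mul_nonneg (sq_nonneg y) (by nlinarith : (0:ℝ) ≤ 1/4 - y^2),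
      mul_nonneg (pow_nonneg hpos 3) (by nlinarith : (0:ℝ) ≤ 1/4 - y^2)]
  · have ha : |y| = -y := abs_of_neg hneg
    rw [ha] at h
    have hb := (abs_le.mp h).1
    have h1y : (1:ℝ)/2 ≤ 1 - -y := by linarith
    have hny : (0:ℝ) ≤ -y := by linarith
    have h5 : (-y)^5 / (1 - -y) ≤ 2 * (-y)^5 := by
      rw [div_le_iff₀ (by linarith)]
      nlinarith [pow_nonneg hny 5, pow_nonneg hny 6]
    nlinarith [hb,
      mul_nonneg (sq_nonneg y) (by linarith : (0:ℝ) ≤ 1/2 + y),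
      mul_nonneg (mul_nonneg (sq_nonneg y) (sq_nonneg y)) (by linarith : (0:ℝ) ≤ 1/2 + y),
      mul_nonneg (sq_nonneg y) (by nlinarith : (0:ℝ) ≤ 1/4 - y^2)]

theorem stmt11 (N : ℕ) (hN : 1 ≤ N) (K : ℕ) (hK : 1 ≤ K)
    (hKN : 4 * Real.log N ≤ K)
    (ℓ : ℝ) (hℓ : ℓ = Real.sqrt (Real.log N / K)) (hℓ0 : 0 < ℓ)
    (u : ℕ → Fin N → ℝ) (hu : ∀ k i, u k i ∈ Set.Icc (-1 : ℝ) 1)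
    (w : ℕ → Fin N → ℝ)
    (hw0 : ∀ i, w 0 i = 1)
    (hwsucc : ∀ k i, w (k + 1) i = (1 + ℓ * u k i) * w k i)
    (Q : ℕ → Fin N → ℝ) (hQ : ∀ k i, Q k i = w k i / ∑ j, w k j)
    (P : Fin N → ℝ) (hP0 : ∀ i, 0 ≤ P i) (hP1 : ∑ i, P i = 1) :
    (∑ k ∈ Finset.range K, ∑ i, P i * u k i)
      - (∑ k ∈ Finset.range K, ∑ i, Q k i * u k i)
      ≤ 2 * Real.sqrt (K * Real.log N) := by
  have hK0 : (0:ℝ) < K := by exact_mod_cast hK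
  have hlogN : 0 < Real.log N := by
    have h := hℓ0
    rw [hℓ, Real.sqrt_pos] at h
    rcases div_pos_iff.mp h with ⟨h1, _⟩ | ⟨_, h2⟩
    · exact h1
    · linarith
  have hℓsq : ℓ^2 = Real.log N / K := by
    rw [hℓ, Real.sq_sqrt (by positivity)]
  have hℓhalf : ℓ ≤ 1/2 := by
    have h4 : Real.log N / K ≤ 1/4 := by rw [div_le_iff₀ hK0]; linarith
    nlinarith [hℓsq, hℓ0]
  have hfac : ∀ k i, (1:ℝ)/2 ≤ 1 + ℓ * u k i := by
    intro k i
    have h1 := (hu k i).1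
    nlinarith [mul_le_mul_of_nonneg_left h1 hℓ0.le]
  have hwpos : ∀ k i, 0 < w k i := by
    intro k
    induction k with
    | zero => intro i; rw [hw0]; norm_num
    | succ m ih =>
      intro i
      rw [hwsucc]
      exact mul_pos (by linarith [hfac m i]) (ih i)
  have hWpos : ∀ k, 0 < ∑ i, w k i := by
    intro k
    exact Finset.sum_pos (fun i _ => hwpos k i) ⟨⟨0, hN⟩, Finset.mem_univ _⟩
  have hQ0 : ∀ k i, 0 ≤ Q k i := fun k i => by
    rw [hQ]; exact div_nonneg (hwpos k i).le (hWpos k).le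
  have hQu : ∀ k, -1 ≤ ∑ i, Q k i * u k i := by
    intro k
    have hQsum : ∑ i, Q k i = 1 := by
      simp only [hQ, ← Finset.sum_div]
      exact div_self (hWpos k).ne'
    calc (-1:ℝ) = ∑ i, Q k i * (-1) := by rw [← Finset.sum_mul, hQsum]; ring
    _ ≤ ∑ i, Q k i * u k i :=
      Finset.sum_le_sum (fun i _ => mul_le_mul_of_nonneg_left (hu k i).1 (hQ0 k i))
  -- upper bound on log of total weight
  have hA : ∀ m, Real.log (∑ i, w m i)
      ≤ Real.log N + ℓ * ∑ k ∈ Finset.range m, ∑ i, Q k i * u k i := by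
    intro m
    induction m with
    | zero => simp [hw0]
    | succ m ih =>
      have hstep : (∑ i, w (m+1) i)
          = (∑ i, w m i) * (1 + ℓ * ∑ i, Q m i * u m i) := by
        have hq : ∑ i, Q m i * u m i = (∑ i, w m i * u m i) / (∑ i, w m i) := by
          rw [Finset.sum_div]
          exact Finset.sum_congr rfl fun i _ => by rw [hQ]; ring
        have expand : ∑ i, (1 + ℓ * u m i) * w m i
            = (∑ i, w m i) + ℓ * ∑ i, w m i * u m i := by
          rw [Finset.mul_sum, ← Finset.sum_add_distrib]
          exact Finset.sum_congr rfl fun i _ => by ring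
        simp only [hwsucc]
        rw [expand, hq, mul_add, mul_one]
        congr 1
        rw [mul_left_comm, mul_comm (∑ i, w m i), div_mul_cancel₀ _ (hWpos m).ne']
      have hpos1 : (0:ℝ) < 1 + ℓ * ∑ i, Q m i * u m i := by
        nlinarith [hQu m, mul_le_mul_of_nonneg_left (hQu m) hℓ0.le]
      have hlog1 : Real.log (1 + ℓ * ∑ i, Q m i * u m i) ≤ ℓ * ∑ i, Q m i * u m i := by
        have := Real.log_le_sub_one_of_pos hpos1
        linarith
      rw [hstep, Real.log_mul (hWpos m).ne' hpos1.ne', Finset.sum_range_succ]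
      linarith
  -- lower bound on log of each weight
  have hB : ∀ m i, ℓ * (∑ k ∈ Finset.range m, u k i) - ℓ^2 * m ≤ Real.log (w m i) := by
    intro m i
    induction m with
    | zero => simp [hw0]
    | succ m ih =>
      have hy : |ℓ * u m i| ≤ 1/2 := by
        rw [abs_mul, abs_of_pos hℓ0]
        have h2 : |u m i| ≤ 1 := abs_le.mpr ⟨(hu m i).1, (hu m i).2⟩
        calc ℓ * |u m i| ≤ ℓ * 1 := mul_le_mul_of_nonneg_left h2 hℓ0.le
        _ ≤ 1/2 := by linarith
      have hlow := aux_log_one_add (ℓ * u m i) hy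
      have hsq : (ℓ * u m i)^2 ≤ ℓ^2 := by
        have h2 : (u m i)^2 ≤ 1 := by nlinarith [(hu m i).1, (hu m i).2]
        nlinarith [sq_nonneg ℓ]
      rw [hwsucc, Real.log_mul (by linarith [hfac m i]) (hwpos m i).ne',
        Finset.sum_range_succ]
      push_cast
      nlinarith
  -- weighted lower bound
  have hPB : ℓ * (∑ k ∈ Finset.range K, ∑ i, P i * u k i) - ℓ^2 * K
      ≤ Real.log (∑ i, w K i) := by
    have hswap : ∑ k ∈ Finset.range K, ∑ i, P i * u k i
        = ∑ i, P i * (∑ k ∈ Finset.range K, u k i) := by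
      rw [Finset.sum_comm]
      exact Finset.sum_congr rfl fun i _ => by rw [Finset.mul_sum]
    have h1 : ∑ i, P i * (ℓ * (∑ k ∈ Finset.range K, u k i) - ℓ^2 * K)
        ≤ ∑ i, P i * Real.log (w K i) :=
      Finset.sum_le_sum fun i _ => mul_le_mul_of_nonneg_left (hB K i) (hP0 i)
    have h2 : ∑ i, P i * Real.log (w K i) ≤ Real.log (∑ i, w K i) := by
      calc ∑ i, P i * Real.log (w K i)
          ≤ ∑ i, P i * Real.log (∑ j, w K j) :=
            Finset.sum_le_sum fun i _ => mul_le_mul_of_nonneg_left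
              (Real.log_le_log (hwpos K i)
                (Finset.single_le_sum (fun j _ => (hwpos K j).le) (Finset.mem_univ i)))
              (hP0 i)
        _ = Real.log (∑ j, w K j) := by rw [← Finset.sum_mul, hP1, one_mul]
    have h3 : ∑ i, P i * (ℓ * (∑ k ∈ Finset.range K, u k i) - ℓ^2 * K)
        = ℓ * (∑ i, P i * (∑ k ∈ Finset.range K, u k i)) - ℓ^2 * K := by
      simp only [mul_sub]
      rw [Finset.sum_sub_distrib, ← Finset.sum_mul, hP1, one_mul, Finset.mul_sum]
      congr 1
      exact Finset.sum_congr rfl fun i _ => by ring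
    rw [hswap]
    linarith
  -- combine
  have hmain : ℓ * (∑ k ∈ Finset.range K, ∑ i, P i * u k i) - ℓ^2 * K
      ≤ Real.log N + ℓ * ∑ k ∈ Finset.range K, ∑ i, Q k i * u k i :=
    le_trans hPB (hA K)
  have hlK : Real.log N = ℓ^2 * K := by
    rw [hℓsq]; field_simp
  have hℓK : ℓ * K = Real.sqrt (K * Real.log N) := by
    have h1 : (K : ℝ) * Real.log N = (ℓ * K)^2 := by
      rw [mul_pow, hℓsq]; field_simp
    rw [h1, Real.sqrt_sq (by positivity)]
  have hfinal : ℓ * ((∑ k ∈ Finset.range K, ∑ i, P i * u k i)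
      - (∑ k ∈ Finset.range K, ∑ i, Q k i * u k i)) ≤ ℓ * (2 * ℓ * K) := by
    rw [hlK] at hmain
    ring_nf
    ring_nf at hmain
    linarith
  have := (mul_le_mul_iff_right₀ hℓ0).mp hfinal
  rw [← hℓK]
  linarith
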